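/- For t = 2, the fundamental group π_1(Q, I) of the standard presentation of the squid algebra S(2,p,τ) is isomorphic to ℤ. -/

import Mathlib

/-!
Squid algebras and their first Hochschild cohomology.

The squid algebra `S(t,p,τ)` is `kQ/I` for the squid quiver `Q`; we encode it
via its universal property: an algebra equipped with a complete family of
orthogonal idempotents indexed by the vertices of the squid quiver, elements
corresponding to the arrows, satisfying the squid relations, and universal
among such algebras.

`HH^1` is encoded via derivations modulo inner derivations.
-/

open scoped BigOperators

/-- The vertices of the squid quiver: the source `0`, the center `c`,
and the branch vertices `(i,j)` for `1 ≤ i ≤ t`, `1 ≤ j ≤ p i`. -/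
def SquidVertex (t : ℕ) (p : Fin t → ℕ) : Type :=
  Unit ⊕ (Unit ⊕ (Σ i : Fin t, Fin (p i)))

instance (t : ℕ) (p : Fin t → ℕ) : Fintype (SquidVertex t p) := by
  unfold SquidVertex; infer_instance

instance (t : ℕ) (p : Fin t → ℕ) : DecidableEq (SquidVertex t p) := by
  unfold SquidVertex; infer_instance

/-- The source vertex `0`. -/
def SquidVertex.src {t : ℕ} {p : Fin t → ℕ} : SquidVertex t p := Sum.inl ()

/-- The central vertex `c`. -/
def SquidVertex.ctr {t : ℕ} {p : Fin t → ℕ} : SquidVertex t p := Sum.inr (Sum.inl ())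

/-- The branch vertex `(i,j)`. -/
def SquidVertex.br {t : ℕ} {p : Fin t → ℕ} (i : Fin t) (j : Fin (p i)) : SquidVertex t p :=
  Sum.inr (Sum.inr ⟨i, j⟩)

/-- The arrows of the squid quiver: `a₁, a₂ : 0 → c` (a `Fin 2` of arrows),
`bᵢ : c → (i,1)`, and the branch arrows `(i,j) → (i,j+1)`. -/
def SquidArrow (t : ℕ) (p : Fin t → ℕ) :
    SquidVertex t p → SquidVertex t p → Type
  | Sum.inl _, Sum.inr (Sum.inl _) => Fin 2
  | Sum.inr (Sum.inl _), Sum.inr (Sum.inr ⟨_, j⟩) => PLift (j.val = 0)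
  | Sum.inr (Sum.inr ⟨i, j⟩), Sum.inr (Sum.inr ⟨i', j'⟩) =>
      PLift (∃ _ : i = i', j'.val = j.val + 1)
  | _, _ => Empty

/-- The squid quiver. -/
instance squidQuiver (t : ℕ) (p : Fin t → ℕ) : Quiver (SquidVertex t p) :=
  ⟨SquidArrow t p⟩
open CategoryTheory Quiver

/-- The two-sided "ideal closure" (inside the linearised path category) of a family `R`
of relations: the `k`-span of all translates `u · r · v` of relations `r ∈ R` by paths. -/
def relIdeal (k : Type) [Field k] {V : Type} [Quiver.{0} V]
    (R : Set (Σ x y : V, (Quiver.Path x y →₀ k))) (x y : V) :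
    Set (Quiver.Path x y →₀ k) :=
  (Submodule.span k { w : Quiver.Path x y →₀ k |
    ∃ (a b : V) (u : Quiver.Path x a) (r : Quiver.Path a b →₀ k) (v : Quiver.Path b y),
      (⟨a, b, r⟩ : Σ x y : V, (Quiver.Path x y →₀ k)) ∈ R ∧
      w = Finsupp.mapDomain (fun q => (u.comp q).comp v) r } : Set _)

/-- A minimal relation of a system `I` of linear combinations of parallel paths:
a nonzero element of `I x y` no proper nonempty "subsum" of which lies in `I x y`
(Martínez-Villa–de la Peña). -/
def IsMinimalRelation (k : Type) [Field k] {V : Type} [Quiver.{0} V]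
    (I : ∀ x y : V, Set (Quiver.Path x y →₀ k)) {x y : V}
    (r : Quiver.Path x y →₀ k) : Prop :=
  r ∈ I x y ∧ r ≠ 0 ∧
    ∀ r₁ r₂ : Quiver.Path x y →₀ k, r = r₁ + r₂ →
      Disjoint r₁.support r₂.support → r₁ ≠ 0 → r₂ ≠ 0 → r₁ ∉ I x y

/-- The morphism of the free groupoid on `V` associated to a path in `V`. -/
def homOfPath {V : Type} [Quiver.{0} V] :
    ∀ {x y : V}, Quiver.Path x y →
      ((Quiver.FreeGroupoid.of V).obj x ⟶ (Quiver.FreeGroupoid.of V).obj y)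
  | _, _, Quiver.Path.nil => 𝟙 _
  | _, _, Quiver.Path.cons q f => homOfPath q ≫ (Quiver.FreeGroupoid.of V).map f

/-- The normal subgroup of homotopy relations: the normal closure, in the fundamental
group of the underlying graph of `V` at `x₀` (the vertex group of the free groupoid),
of the elements `w ≫ u ≫ v⁻¹ ≫ w⁻¹` for `u, v` two parallel paths appearing in a common
minimal relation of `I`. -/
def homotopyRelations (k : Type) [Field k] {V : Type} [Quiver.{0} V]
    (I : ∀ x y : V, Set (Quiver.Path x y →₀ k)) (x₀ : V) :
    Subgroup ((Quiver.FreeGroupoid.of V).obj x₀ ⟶ (Quiver.FreeGroupoid.of V).obj x₀) :=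
  Subgroup.normalClosure
    { g | ∃ (x y : V) (r : Quiver.Path x y →₀ k), IsMinimalRelation k I r ∧
        ∃ u ∈ r.support, ∃ v ∈ r.support,
          ∃ w : (Quiver.FreeGroupoid.of V).obj x₀ ⟶ (Quiver.FreeGroupoid.of V).obj x,
            g = w ≫ homOfPath u ≫ Groupoid.inv (homOfPath v) ≫ Groupoid.inv w }

/-- The fundamental group `π₁(Q, I)` of a bound quiver, at the base vertex `x₀`. -/
def piOne (k : Type) [Field k] {V : Type} [Quiver.{0} V]
    (I : ∀ x y : V, Set (Quiver.Path x y →₀ k)) (x₀ : V) : Type :=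
  ((Quiver.FreeGroupoid.of V).obj x₀ ⟶ (Quiver.FreeGroupoid.of V).obj x₀) ⧸ homotopyRelations k I x₀

noncomputable instance (k : Type) [Field k] {V : Type} [Quiver.{0} V]
    (I : ∀ x y : V, Set (Quiver.Path x y →₀ k)) (x₀ : V) : Group (piOne k I x₀) :=
  letI : (homotopyRelations k I x₀).Normal := Subgroup.normalClosure_normal
  QuotientGroup.Quotient.group _
/-- The arrow `aₘ : 0 → c` (`m = 0,1`) of the squid quiver. -/
def squidArrA {t : ℕ} {p : Fin t → ℕ} (m : Fin 2) :
    (SquidVertex.src : SquidVertex t p) ⟶ SquidVertex.ctr :=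
  (m : SquidArrow t p SquidVertex.src SquidVertex.ctr)

/-- The arrow `bᵢ : c → (i,1)` of the squid quiver. -/
def squidArrB {t : ℕ} {p : Fin t → ℕ} (i : Fin t) (h : 0 < p i) :
    (SquidVertex.ctr : SquidVertex t p) ⟶ SquidVertex.br i ⟨0, h⟩ :=
  (PLift.up rfl : SquidArrow t p SquidVertex.ctr (SquidVertex.br i ⟨0, h⟩))

/-- The path `bᵢ ∘ aₘ : 0 → (i,1)` in the squid quiver. -/
def squidPathBA {t : ℕ} {p : Fin t → ℕ} (i : Fin t) (h : 0 < p i) (m : Fin 2) :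
    Quiver.Path (SquidVertex.src : SquidVertex t p) (SquidVertex.br i ⟨0, h⟩) :=
  (Quiver.Path.nil.cons (squidArrA m)).cons (squidArrB i h)

/-- The generating relations of the squid algebra, as linear combinations of
parallel paths: `b₁a₁`, `b₂a₂`, and `bᵢa₂ - τᵢ·(bᵢa₁)` for `2 ≤ i` (0-based). -/
def squidRelations (k : Type) [Field k] (t : ℕ) (p : Fin t → ℕ) (τ : Fin t → k) :
    Set (Σ x y : SquidVertex t p, (Quiver.Path x y →₀ k)) :=
  { s | ∃ (i : Fin t) (h : 0 < p i),
      (i.val = 0 ∧ s = ⟨SquidVertex.src, SquidVertex.br i ⟨0, h⟩,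
          Finsupp.single (squidPathBA i h 0) 1⟩) ∨
      (i.val = 1 ∧ s = ⟨SquidVertex.src, SquidVertex.br i ⟨0, h⟩,
          Finsupp.single (squidPathBA i h 1) 1⟩) ∨
      (2 ≤ i.val ∧ s = ⟨SquidVertex.src, SquidVertex.br i ⟨0, h⟩,
          Finsupp.single (squidPathBA i h 1) 1 - τ i • Finsupp.single (squidPathBA i h 0) 1⟩) }

/-! ### Auxiliary material for the proof -/

open CategoryTheory Quiver Groupoid Quiver.FreeGroupoid

namespace SquidAux

/-- In a span of "monomials" (single-path linear combinations), each coordinate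
projection of a member again belongs to the span. -/
lemma single_mem_span {α : Type*} {k : Type} [Field k] {S : Set (α →₀ k)}
    (hS : ∀ s ∈ S, ∃ q c, s = Finsupp.single q c)
    {w : α →₀ k} (hw : w ∈ Submodule.span k S) {u : α} (hu : u ∈ w.support) :
    Finsupp.single u (w u) ∈ Submodule.span k S := by
  classical
  set B : Set α := {q | ∃ s ∈ S, q ∈ s.support} with hB
  have hspan : Submodule.span k S ≤ Finsupp.supported k k B := by
    rw [Submodule.span_le]
    intro s hs
    rw [SetLike.mem_coe, Finsupp.mem_supported]
    intro q hq
    exact ⟨s, hs, hq⟩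
  have hu' : u ∈ B := (Finsupp.mem_supported k w).mp (hspan hw) hu
  obtain ⟨s, hsS, hus⟩ := hu'
  obtain ⟨q, c, rfl⟩ := hS s hsS
  have h1 : Finsupp.single q c u ≠ 0 := Finsupp.mem_support_iff.mp hus
  have hq : q = u := by
    by_contra hne
    rw [Finsupp.single_apply, if_neg hne] at h1
    exact h1 rfl
  subst hq
  have hc : c ≠ 0 := by
    rw [Finsupp.single_apply, if_pos rfl] at h1
    exact h1
  have : Finsupp.single q (w q) = (w q * c⁻¹) • Finsupp.single q c := by
    rw [Finsupp.smul_single, smul_eq_mul, mul_assoc, inv_mul_cancel₀ hc, mul_one]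
  rw [this]
  exact Submodule.smul_mem _ _ (Submodule.subset_span hsS)

variable {k : Type} [Field k] {p : Fin 2 → ℕ} {τ : Fin 2 → k}

/-- For `t = 2`, every generating translate of the squid relations ideal is a monomial. -/
lemma squid_span_singles (x y : SquidVertex 2 p) :
    ∀ s ∈ { w : Quiver.Path x y →₀ k |
      ∃ (a b : SquidVertex 2 p) (u : Quiver.Path x a) (r : Quiver.Path a b →₀ k)
        (v : Quiver.Path b y),
      (⟨a, b, r⟩ : Σ x y : SquidVertex 2 p, (Quiver.Path x y →₀ k)) ∈ squidRelations k 2 p τ ∧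
      w = Finsupp.mapDomain (fun q => (u.comp q).comp v) r }, ∃ q c, s = Finsupp.single q c := by
  rintro s ⟨a, b, u, r, v, hr, rfl⟩
  obtain ⟨i, h, hcase⟩ := hr
  have hsingle : ∃ q₀, r = Finsupp.single q₀ (1 : k) ∨ False := by
    rcases hcase with ⟨hi, heq⟩ | ⟨hi, heq⟩ | ⟨hi, _⟩
    · injection heq with h1 h2
      subst h1
      injection (eq_of_heq h2) with h3 h4
      subst h3
      exact ⟨_, Or.inl (eq_of_heq h4)⟩
    · injection heq with h1 h2
      subst h1
      injection (eq_of_heq h2) with h3 h4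
      subst h3
      exact ⟨_, Or.inl (eq_of_heq h4)⟩
    · exact absurd hi (by omega)
  obtain ⟨q₀, hq₀ | hF⟩ := hsingle
  · subst hq₀
    exact ⟨_, _, Finsupp.mapDomain_single⟩
  · exact hF.elim

/-- Minimal relations of the squid ideal (`t = 2`) have singleton support. -/
lemma minimal_support_eq {x y : SquidVertex 2 p}
    {r : Quiver.Path x y →₀ k}
    (hmin : IsMinimalRelation k (relIdeal k (squidRelations k 2 p τ)) r)
    {u v : Quiver.Path x y} (hu : u ∈ r.support) (hv : v ∈ r.support) : u = v := by
  classical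
  by_contra hne
  obtain ⟨hrI, _, hsplit⟩ := hmin
  have h1 : Finsupp.single u (r u) ∈ relIdeal k (squidRelations k 2 p τ) x y := by
    exact single_mem_span (squid_span_singles x y) hrI hu
  refine hsplit (Finsupp.single u (r u)) (r.erase u)
    (Finsupp.single_add_erase u r).symm ?_ ?_ ?_ h1
  · rw [Finset.disjoint_left]
    intro q hq hq'
    have hqu : q = u := Finset.mem_singleton.mp (Finsupp.support_single_subset hq)
    rw [Finsupp.support_erase, Finset.mem_erase] at hq'
    exact hq'.1 hqu
  · intro h0
    have hmem := Finsupp.mem_support_iff.mp hu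
    apply hmem
    have h0' := DFunLike.congr_fun h0 u
    simpa using h0'
  · intro h0
    have : v ∈ (r.erase u).support := by
      rw [Finsupp.support_erase, Finset.mem_erase]
      exact ⟨fun hvu => hne hvu.symm, hv⟩
    rw [h0] at this
    simp at this

lemma homotopy_bot (k : Type) [Field k] (p : Fin 2 → ℕ) (τ : Fin 2 → k) :
    homotopyRelations k (relIdeal k (squidRelations k 2 p τ))
      (SquidVertex.src : SquidVertex 2 p) = ⊥ := by
  refine le_antisymm (Subgroup.normalClosure_le_normal ?_) bot_le
  rintro g ⟨x, y, r, hmin, u, hu, v, hv, w, rfl⟩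
  have huv : u = v := minimal_support_eq hmin hu hv
  subst huv
  rw [SetLike.mem_coe, Subgroup.mem_bot]
  show w ≫ homOfPath u ≫ Groupoid.inv (homOfPath u) ≫ Groupoid.inv w = 𝟙 _
  rw [← Category.assoc (homOfPath u), Groupoid.comp_inv, Category.id_comp, Groupoid.comp_inv]

end SquidAux

namespace SquidAux

variable (p : Fin 2 → ℕ)

/-- Base object of the free groupoid. -/
noncomputable abbrev s0 : Quiver.FreeGroupoid (SquidVertex 2 p) :=
  (Quiver.FreeGroupoid.of (SquidVertex 2 p)).obj SquidVertex.src

/-- The loop `a₁ a₀⁻¹`. -/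
noncomputable def gloop : s0 p ⟶ s0 p :=
  (Quiver.FreeGroupoid.of (SquidVertex 2 p)).map (squidArrA 1) ≫
    Groupoid.inv ((Quiver.FreeGroupoid.of (SquidVertex 2 p)).map (squidArrA 0))

/-- Winding number of an arrow. -/
def wind : ∀ (x y : SquidVertex 2 p), SquidArrow 2 p x y → Multiplicative ℤ
  | Sum.inl _, Sum.inr (Sum.inl _), m => Multiplicative.ofAdd (m.val : ℤ)
  | _, _, _ => 1

/-- The winding prefunctor. -/
def φq : SquidVertex 2 p ⥤q CategoryTheory.SingleObj (Multiplicative ℤ) where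
  obj _ := CategoryTheory.SingleObj.star _
  map {x y} a := wind p x y a

lemma Fmap_of {x y : SquidVertex 2 p} (a : x ⟶ y) :
    (Quiver.FreeGroupoid.lift (φq p)).map ((Quiver.FreeGroupoid.of (SquidVertex 2 p)).map a)
      = wind p x y a := by
  change ((Quiver.FreeGroupoid.of (SquidVertex 2 p)) ⋙q
      (Quiver.FreeGroupoid.lift (φq p)).toPrefunctor).map a = _
  rw [Quiver.FreeGroupoid.lift_spec]
  rfl

/-- Tree homs to branch vertices. -/
noncomputable def brHom (i : Fin 2) :
    ∀ (j : ℕ) (h : j < p i),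
      (s0 p ⟶ (Quiver.FreeGroupoid.of (SquidVertex 2 p)).obj (SquidVertex.br i ⟨j, h⟩))
  | 0, h => (Quiver.FreeGroupoid.of (SquidVertex 2 p)).map (squidArrA 0) ≫
      (Quiver.FreeGroupoid.of (SquidVertex 2 p)).map (squidArrB i h)
  | j+1, h => brHom i j (Nat.lt_of_succ_lt h) ≫
      (Quiver.FreeGroupoid.of (SquidVertex 2 p)).map
        (show SquidArrow 2 p (SquidVertex.br i ⟨j, Nat.lt_of_succ_lt h⟩)
            (SquidVertex.br i ⟨j+1, h⟩) from PLift.up ⟨rfl, rfl⟩)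

/-- Tree homs. -/
noncomputable def eta : ∀ x : SquidVertex 2 p,
    (s0 p ⟶ (Quiver.FreeGroupoid.of (SquidVertex 2 p)).obj x)
  | Sum.inl _ => 𝟙 (s0 p)
  | Sum.inr (Sum.inl _) => (Quiver.FreeGroupoid.of (SquidVertex 2 p)).map (squidArrA 0)
  | Sum.inr (Sum.inr ⟨i, j⟩) => brHom p i j.val j.isLt

/-- The "contraction to base point" endofunctor. -/
noncomputable def Nfun : Quiver.FreeGroupoid (SquidVertex 2 p) ⥤ Quiver.FreeGroupoid (SquidVertex 2 p) where
  obj _ := s0 p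
  map {x y} f := eta p x.as ≫ f ≫ Groupoid.inv (eta p y.as)
  map_id x := by
    show eta p x.as ≫ 𝟙 x ≫ Groupoid.inv (eta p x.as) = 𝟙 (s0 p)
    erw [Category.id_comp]
    exact Groupoid.comp_inv _
  map_comp {x y z} f g := by
    show eta p x.as ≫ (f ≫ g) ≫ Groupoid.inv (eta p z.as) =
      (eta p x.as ≫ f ≫ Groupoid.inv (eta p y.as)) ≫
        (eta p y.as ≫ g ≫ Groupoid.inv (eta p z.as))
    have e : ∀ {U X Y Z W V : Quiver.FreeGroupoid (SquidVertex 2 p)} (a : U ⟶ X) (f : X ⟶ Y)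
        (b : V ⟶ Y) (g : Y ⟶ Z) (c : Z ⟶ W),
        a ≫ (f ≫ g) ≫ c = (a ≫ f ≫ Groupoid.inv b) ≫ (b ≫ g ≫ c) := by
      intros; simp
    exact e _ _ _ _ _

lemma gloop_key (m n : Multiplicative ℤ) :
    gloop p ^ Multiplicative.toAdd (m * n) =
      (gloop p ^ Multiplicative.toAdd n) ≫ (gloop p ^ Multiplicative.toAdd m) := by
  rw [toAdd_mul, add_comm, zpow_add]
  rfl

/-- The functor from `SingleObj (Multiplicative ℤ)` picking out powers of `gloop`. -/
noncomputable def Efun : CategoryTheory.SingleObj (Multiplicative ℤ) ⥤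
    Quiver.FreeGroupoid (SquidVertex 2 p) where
  obj _ := s0 p
  map n := gloop p ^ (Multiplicative.toAdd n)
  map_id _ := by
    show gloop p ^ (Multiplicative.toAdd (1 : Multiplicative ℤ)) = _
    rw [toAdd_one, zpow_zero]
    rfl
  map_comp {x y z} f g := gloop_key p g f

end SquidAux

namespace SquidAux

variable (p : Fin 2 → ℕ)

lemma FE_eq_N :
    Quiver.FreeGroupoid.lift (φq p) ⋙ Efun p = Nfun p := by
  rw [show Nfun p = Quiver.FreeGroupoid.lift
      ((Quiver.FreeGroupoid.of (SquidVertex 2 p)) ⋙q (Nfun p).toPrefunctor) from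
    Quiver.FreeGroupoid.lift_unique _ _ rfl]
  apply Quiver.FreeGroupoid.lift_unique
  fapply Prefunctor.ext
  · intro x
    rfl
  · intro x y a
    show (Efun p).map ((Quiver.FreeGroupoid.lift (φq p)).map
        ((Quiver.FreeGroupoid.of (SquidVertex 2 p)).map a)) =
      eta p x ≫ (Quiver.FreeGroupoid.of (SquidVertex 2 p)).map a ≫ Groupoid.inv (eta p y)
    rw [Fmap_of]
    show gloop p ^ (Multiplicative.toAdd (wind p x y a)) = _
    rcases x with ⟨⟩ | ⟨⟩ | ⟨i, j⟩ <;> rcases y with ⟨⟩ | ⟨⟩ | ⟨i', j'⟩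
    · exact (a : Empty).elim
    · -- src → ctr : the two arrows a₀, a₁
      rcases (a : Fin 2) with ⟨av, hav⟩
      rcases av with _ | _ | n
      · show gloop p ^ ((0 : ℕ) : ℤ) = _
        rw [Nat.cast_zero, zpow_zero]
        show 𝟙 _ = 𝟙 _ ≫ (Quiver.FreeGroupoid.of (SquidVertex 2 p)).map (squidArrA 0) ≫
          Groupoid.inv ((Quiver.FreeGroupoid.of (SquidVertex 2 p)).map (squidArrA 0))
        rw [Category.id_comp, Groupoid.comp_inv]
      · show gloop p ^ ((1 : ℕ) : ℤ) = _
        rw [Nat.cast_one, zpow_one]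
        show gloop p = 𝟙 _ ≫ (Quiver.FreeGroupoid.of (SquidVertex 2 p)).map (squidArrA 1) ≫
          Groupoid.inv ((Quiver.FreeGroupoid.of (SquidVertex 2 p)).map (squidArrA 0))
        rw [Category.id_comp]
        rfl
      · exact absurd hav (by omega)
    · exact (a : Empty).elim
    · exact (a : Empty).elim
    · exact (a : Empty).elim
    · -- ctr → (i,0) : the arrow bᵢ
      have hj0 : j'.val = 0 := (a : PLift (j'.val = 0)).down
      obtain ⟨jv, hlt⟩ := j'
      subst hj0
      show gloop p ^ (Multiplicative.toAdd (1 : Multiplicative ℤ)) = _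
      rw [toAdd_one, zpow_zero]
      show 𝟙 _ = (Quiver.FreeGroupoid.of (SquidVertex 2 p)).map (squidArrA 0) ≫
        ((Quiver.FreeGroupoid.of (SquidVertex 2 p)).map (squidArrB i' hlt) ≫
        Groupoid.inv ((Quiver.FreeGroupoid.of (SquidVertex 2 p)).map (squidArrA 0) ≫
          (Quiver.FreeGroupoid.of (SquidVertex 2 p)).map (squidArrB i' hlt)))
      rw [← Category.assoc, Groupoid.comp_inv]
    · exact (a : Empty).elim
    · exact (a : Empty).elim
    · -- (i,j) → (i,j+1) : tail arrows
      obtain ⟨jv', hlt'⟩ := j'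
      obtain ⟨hii, hjj⟩ :=
        (a : PLift (∃ _ : i = i', (⟨jv', hlt'⟩ : Fin (p i')).val = j.val + 1)).down
      subst hii
      subst hjj
      show gloop p ^ (Multiplicative.toAdd (1 : Multiplicative ℤ)) = _
      rw [toAdd_one, zpow_zero]
      show 𝟙 _ = brHom p i j.val j.isLt ≫
        ((Quiver.FreeGroupoid.of (SquidVertex 2 p)).map
            (show SquidArrow 2 p (SquidVertex.br i ⟨j.val, j.isLt⟩)
              (SquidVertex.br i ⟨j.val + 1, hlt'⟩) from PLift.up ⟨rfl, rfl⟩) ≫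
          Groupoid.inv (brHom p i j.val j.isLt ≫
            (Quiver.FreeGroupoid.of (SquidVertex 2 p)).map
              (show SquidArrow 2 p (SquidVertex.br i ⟨j.val, j.isLt⟩)
                (SquidVertex.br i ⟨j.val + 1, hlt'⟩) from PLift.up ⟨rfl, rfl⟩)))
      rw [← Category.assoc, Groupoid.comp_inv]

end SquidAux

namespace SquidAux

variable (p : Fin 2 → ℕ)

lemma Emap_Fmap (f : s0 p ⟶ s0 p) :
    gloop p ^ (Multiplicative.toAdd
      ((Quiver.FreeGroupoid.lift (φq p)).map f : Multiplicative ℤ)) = f := by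
  have h := Functor.congr_hom (FE_eq_N p) f
  simp only [Functor.comp_map, eqToHom_refl, Category.id_comp, Category.comp_id] at h
  have h2 : (Nfun p).map f = f := by
    show eta p SquidVertex.src ≫ f ≫ Groupoid.inv (eta p SquidVertex.src) = f
    show 𝟙 _ ≫ f ≫ Groupoid.inv (𝟙 _) = f
    rw [Category.id_comp, Groupoid.inv_eq_inv, IsIso.inv_id, Category.comp_id]
  rw [h2] at h
  erw [eqToHom_refl] at h
  exact h.trans ((Category.id_comp _).trans (Category.comp_id _))

/-- The winding monoid homomorphism on the vertex group. -/
noncomputable def windHom : (s0 p ⟶ s0 p) →* Multiplicative ℤ where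
  toFun f := (Quiver.FreeGroupoid.lift (φq p)).map f
  map_one' := by
    show (Quiver.FreeGroupoid.lift (φq p)).map (𝟙 _) = 1
    rw [CategoryTheory.Functor.map_id]
    rfl
  map_mul' f f' := by
    show (Quiver.FreeGroupoid.lift (φq p)).map (f ≫ f') = _
    rw [Functor.map_comp, CategoryTheory.SingleObj.comp_as_mul]
    exact mul_comm (G := Multiplicative ℤ) _ _

lemma windHom_gloop : windHom p (gloop p) = Multiplicative.ofAdd 1 := by
  show (Quiver.FreeGroupoid.lift (φq p)).map
    ((Quiver.FreeGroupoid.of (SquidVertex 2 p)).map (squidArrA 1) ≫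
      Groupoid.inv ((Quiver.FreeGroupoid.of (SquidVertex 2 p)).map (squidArrA 0))) = _
  rw [Functor.map_comp, Groupoid.inv_eq_inv, CategoryTheory.Functor.map_inv,
    CategoryTheory.SingleObj.inv_as_inv, Fmap_of, Fmap_of,
    CategoryTheory.SingleObj.comp_as_mul]
  have h0 : wind p _ _ (squidArrA (p := p) 0) = 1 := by
    show Multiplicative.ofAdd (((0 : Fin 2).val : ℤ)) = 1
    norm_num
  have h1 : wind p _ _ (squidArrA (p := p) 1) = Multiplicative.ofAdd 1 := by
    show Multiplicative.ofAdd (((1 : Fin 2).val : ℤ)) = Multiplicative.ofAdd 1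
    norm_num
  rw [h0, h1]
  show (1 : Multiplicative ℤ)⁻¹ * Multiplicative.ofAdd 1 = Multiplicative.ofAdd 1
  rw [inv_one, one_mul]

/-- The vertex group of the free squid groupoid is infinite cyclic. -/
noncomputable def vgIso : (s0 p ⟶ s0 p) ≃* Multiplicative ℤ :=
  { windHom p with
    invFun := fun n => gloop p ^ (Multiplicative.toAdd n)
    left_inv := fun f => Emap_Fmap p f
    right_inv := fun n => by
      show windHom p (gloop p ^ (Multiplicative.toAdd n)) = n
      rw [map_zpow, windHom_gloop]
      rw [← ofAdd_zsmul]
      simp }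

end SquidAux

/-- For `t = 2`, the fundamental group `π₁(Q, I)` of the standard
presentation of the squid algebra `S(2,p,τ)` is isomorphic to `ℤ`. -/
theorem squid_t_eq_two_pi_one_infinite_cyclic (k : Type) [Field k] [IsAlgClosed k]
    (p : Fin 2 → ℕ) (τ : Fin 2 → k) :
    Nonempty (piOne k (relIdeal k (squidRelations k 2 p τ)) SquidVertex.src ≃*
      Multiplicative ℤ) := by
  haveI hN : (homotopyRelations k (relIdeal k (squidRelations k 2 p τ))
      (SquidVertex.src : SquidVertex 2 p)).Normal := Subgroup.normalClosure_normal
  exact ⟨((QuotientGroup.quotientMulEquivOfEq (SquidAux.homotopy_bot k p τ)).trans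
    QuotientGroup.quotientBot).trans (SquidAux.vgIso p)⟩
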